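/- Let φ = f + g with f convex differentiable with L-Lipschitz gradient and g proper lsc convex, and let t ∈ (0, 1/L]. Let x⁺ = prox_{tg}(x − t∇f(x)) and G_t(x) = (x − x⁺)/t. If ‖G_t(x)‖² ≥ ε·(φ(x) − φ(x⁺)) for some 0 < ε ≤ 2/t, then for the unique projection x_p of x onto Argmin φ one has ⟨G_t(x), x − x_p⟩ ≥ (tε/2)·(φ(x) − min φ), i.e., the (cor-obj-EB) condition with ω = tε/2 holds. -/

import Mathlib

open scoped RealInnerProductSpace

section Aux

variable {E : Type*} [NormedAddCommGroup E] [InnerProductSpace ℝ E] [CompleteSpace E]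

private lemma aux_hasDerivAt {f : E → ℝ} {f' : E → E} (hf : ∀ p, HasGradientAt f (f' p) p)
    (x y : E) (s : ℝ) :
    HasDerivAt (fun s : ℝ => f (s • (y - x) + x)) ⟪f' (s • (y - x) + x), y - x⟫ s := by
  have hc : HasDerivAt (fun s : ℝ => s • (y - x) + x) (y - x) s := by
    simpa using ((hasDerivAt_id s).smul_const (y - x)).add_const x
  have h2 := ((hf (s • (y - x) + x)).hasFDerivAt).comp_hasDerivAt s hc
  simpa [InnerProductSpace.toDual_apply_apply, Function.comp_def] using h2

/-- Gradient inequality for convex functions. -/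
private lemma grad_convex_ineq {f : E → ℝ} {f' : E → E}
    (hf : ∀ p, HasGradientAt f (f' p) p) (hconv : ConvexOn ℝ Set.univ f) (x y : E) :
    f x + ⟪f' x, y - x⟫ ≤ f y := by
  have hh : ConvexOn ℝ Set.univ (fun s : ℝ => f (s • (y - x) + x)) := by
    have h := hconv.comp_affineMap (AffineMap.lineMap x y)
    have : (f ∘ (AffineMap.lineMap x y)) = fun s : ℝ => f (s • (y - x) + x) := by
      funext s
      simp [Function.comp, AffineMap.lineMap_apply_module']
    rw [this] at h
    simpa using h
  have hd := aux_hasDerivAt hf x y 0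
  have hs := hh.le_slope_of_hasDerivAt (Set.mem_univ (0:ℝ)) (Set.mem_univ (1:ℝ))
    one_pos hd
  have h0 : (0:ℝ) • (y - x) + x = x := by simp
  have h1 : (1:ℝ) • (y - x) + x = y := by simp
  rw [slope_def_field] at hs
  rw [h0] at hd hs
  simp [h0, h1] at hs
  linarith [hs]

/-- Descent lemma for L-Lipschitz gradients. -/
private lemma descent_lemma {f : E → ℝ} {f' : E → E} {L : ℝ}
    (hf : ∀ p, HasGradientAt f (f' p) p)
    (hLip : ∀ p q, ‖f' p - f' q‖ ≤ L * ‖p - q‖) (x y : E) :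
    f y ≤ f x + ⟪f' x, y - x⟫ + L / 2 * ‖y - x‖ ^ 2 := by
  set c : ℝ := ⟪f' x, y - x⟫ with hc
  set a : ℝ := L * ‖y - x‖ ^ 2 with ha
  set ψ : ℝ → ℝ := fun s => f x + s * c + a * s ^ 2 / 2 - f (s • (y - x) + x) with hψdef
  have hψ : ∀ s : ℝ, HasDerivAt ψ (c + a * s - ⟪f' (s • (y - x) + x), y - x⟫) s := by
    intro s
    have h1 := aux_hasDerivAt hf x y s
    have p1 : HasDerivAt (fun s : ℝ => f x + s * c + a * s ^ 2 / 2) (c + a * s) s := by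
      have q1 : HasDerivAt (fun s : ℝ => f x + s * c) c s := by
        simpa using ((hasDerivAt_id s).mul_const c).const_add (f x)
      have q2 : HasDerivAt (fun s : ℝ => a * s ^ 2 / 2) (a * s) s := by
        have := ((hasDerivAt_pow 2 s).const_mul a).div_const 2
        exact this.congr_deriv (by ring)
      exact q1.add q2
    exact p1.sub h1
  have hcont : Continuous ψ := by
    have : Differentiable ℝ ψ := fun s => (hψ s).differentiableAt
    exact this.continuous
  have hmono : MonotoneOn ψ (Set.Icc (0:ℝ) 1) := by
    apply monotoneOn_of_deriv_nonneg (convex_Icc 0 1) hcont.continuousOn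
    · intro s _
      exact ((hψ s).differentiableAt).differentiableWithinAt
    · intro s hs
      rw [interior_Icc] at hs
      rw [(hψ s).deriv]
      have hip : ⟪f' (s • (y - x) + x) - f' x, y - x⟫ ≤ L * s * ‖y - x‖ ^ 2 := by
        calc ⟪f' (s • (y - x) + x) - f' x, y - x⟫
            ≤ ‖f' (s • (y - x) + x) - f' x‖ * ‖y - x‖ := real_inner_le_norm _ _
          _ ≤ (L * ‖s • (y - x) + x - x‖) * ‖y - x‖ := by
              apply mul_le_mul_of_nonneg_right _ (norm_nonneg _)
              exact hLip _ _
          _ = L * s * ‖y - x‖ ^ 2 := by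
              have : ‖s • (y - x) + x - x‖ = s * ‖y - x‖ := by
                rw [add_sub_cancel_right, norm_smul, Real.norm_eq_abs,
                  abs_of_pos hs.1]
              rw [this]; ring
      have hsplit : ⟪f' (s • (y - x) + x) - f' x, y - x⟫
          = ⟪f' (s • (y - x) + x), y - x⟫ - c := by
        rw [inner_sub_left]
      rw [hsplit] at hip
      have : a * s = L * s * ‖y - x‖ ^ 2 := by rw [ha]; ring
      linarith
  have hkey : ψ 0 ≤ ψ 1 := hmono (by norm_num) (by norm_num) zero_le_one
  have e0 : ψ 0 = 0 := by simp [hψdef]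
  have e1 : ψ 1 = f x + c + a / 2 - f y := by simp [hψdef]
  rw [e0, e1] at hkey
  have : L / 2 * ‖y - x‖ ^ 2 = a / 2 := by rw [ha]; ring
  linarith

/-- Variational inequality for the prox point. -/
private lemma prox_var_ineq {g : E → ℝ} (hg : ConvexOn ℝ Set.univ g) {t : ℝ} (ht : 0 < t)
    {u z : E}
    (hprox : ∀ y, g z + (1/(2*t)) * ‖z - u‖^2 ≤ g y + (1/(2*t)) * ‖y - u‖^2) (y : E) :
    g z ≤ g y + (1/t) * ⟪z - u, y - z⟫ := by
  have hc : (0:ℝ) < 1/(2*t) := by positivity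
  have key : ∀ lam : ℝ, 0 < lam → lam ≤ 1 →
      g z ≤ g y + (1/t) * ⟪z - u, y - z⟫ + lam * ((1/(2*t)) * ‖y - z‖^2) := by
    intro lam hl0 hl1
    set w : E := lam • y + (1 - lam) • z with hw
    have hconv : g w ≤ lam * g y + (1 - lam) * g z := by
      have := hg.2 (Set.mem_univ y) (Set.mem_univ z) (le_of_lt hl0)
        (by linarith : (0:ℝ) ≤ 1 - lam) (by ring)
      simpa [hw] using this
    have hwu : w - u = (z - u) + lam • (y - z) := by
      rw [hw]; module
    have hnorm : ‖w - u‖^2 = ‖z - u‖^2 + 2 * lam * ⟪z - u, y - z⟫ + lam^2 * ‖y - z‖^2 := by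
      rw [hwu, norm_add_sq_real, real_inner_smul_right, norm_smul, Real.norm_eq_abs,
        abs_of_pos hl0, mul_pow]
      ring
    have hp := hprox w
    rw [hnorm] at hp
    -- hp : g z + c‖z-u‖² ≤ g w + c(‖z-u‖² + 2lam⟪⟫ + lam²‖‖²)
    have h2 : lam * g z ≤ lam * (g y + (1/t) * ⟪z - u, y - z⟫ + lam * ((1/(2*t)) * ‖y - z‖^2)) := by
      have htne : t ≠ 0 := ne_of_gt ht
      have expand : lam * (g y + (1/t) * ⟪z - u, y - z⟫ + lam * ((1/(2*t)) * ‖y - z‖^2))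
          = lam * g y + (1/(2*t)) * (2 * lam * ⟪z - u, y - z⟫ + lam^2 * ‖y - z‖^2) := by
        field_simp
        ring
      rw [expand]
      nlinarith [hp, hconv]
    exact le_of_mul_le_mul_left (by linarith [h2]) hl0
  refine le_of_forall_pos_le_add fun δ hδ => ?_
  set C : ℝ := (1/(2*t)) * ‖y - z‖^2 with hC
  have hC0 : 0 ≤ C := by positivity
  set lam : ℝ := min 1 (δ / (C + 1)) with hlam
  have hl0 : 0 < lam := lt_min one_pos (by positivity)
  have hl1 : lam ≤ 1 := min_le_left _ _
  have hlC : lam * C ≤ δ := by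
    have h1 : lam ≤ δ / (C + 1) := min_le_right _ _
    have h2 : lam * C ≤ (δ / (C + 1)) * C :=
      mul_le_mul_of_nonneg_right h1 hC0
    have h3 : (δ / (C + 1)) * C ≤ δ := by
      rw [div_mul_eq_mul_div, div_le_iff₀ (by positivity)]
      nlinarith
    linarith
  have := key lam hl0 hl1
  linarith

end Aux

set_option maxHeartbeats 1600000 in
/-- For `φ = f + g` with `f ∈ F^{1,1}_L`, `g` convex lsc, `t ∈ (0,1/L]`,
`x⁺ = prox_{tg}(x − t∇f(x))` and `G_t(x) = (x − x⁺)/t`. If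
`‖G_t(x)‖² ≥ ε·(φ(x) − φ(x⁺))` with `0 < ε ≤ 2/t`, then
`⟨G_t(x), x − x_p⟩ ≥ (tε/2)·(φ(x) − min φ)` for the projection `x_p` of `x` onto `Argmin φ`. -/
theorem stmt6 {n : ℕ} (f g : EuclideanSpace ℝ (Fin n) → ℝ)
    (f' : EuclideanSpace ℝ (Fin n) → EuclideanSpace ℝ (Fin n))
    (hf : ∀ x, HasGradientAt f (f' x) x)
    (hfconv : ConvexOn ℝ Set.univ f)
    (L : ℝ) (hL : 0 < L)
    (hLip : ∀ x y, ‖f' x - f' y‖ ≤ L * ‖x - y‖)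
    (hgconv : ConvexOn ℝ Set.univ g) (hglsc : LowerSemicontinuous g)
    (t : ℝ) (ht : 0 < t) (htL : t ≤ 1/L)
    (m : ℝ) (hm : ∀ x, m ≤ f x + g x) (hach : ∃ x, f x + g x = m)
    (x xplus : EuclideanSpace ℝ (Fin n))
    (hprox : ∀ y, g xplus + (1/(2*t)) * ‖xplus - (x - t • f' x)‖^2
      ≤ g y + (1/(2*t)) * ‖y - (x - t • f' x)‖^2)
    (ε : ℝ) (hε : 0 < ε) (hεt : ε ≤ 2/t)
    (hcond : ε * ((f x + g x) - (f xplus + g xplus)) ≤ ‖t⁻¹ • (x - xplus)‖^2)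
    (xp : EuclideanSpace ℝ (Fin n))
    (hxp : xp ∈ {z | ∀ y, f z + g z ≤ f y + g y})
    (hxpproj : dist x xp = Metric.infDist x {z | ∀ y, f z + g z ≤ f y + g y}) :
    (t * ε / 2) * ((f x + g x) - m) ≤ ⟪t⁻¹ • (x - xplus), x - xp⟫ := by
  -- scalar abbreviations
  set d : EuclideanSpace ℝ (Fin n) := x - xplus with hd
  set p : EuclideanSpace ℝ (Fin n) := xp - x with hp
  set w : EuclideanSpace ℝ (Fin n) := f' x with hw
  set a : ℝ := ⟪w, d⟫ with hA
  set b : ℝ := ⟪w, p⟫ with hB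
  set c : ℝ := ⟪d, p⟫ with hCc
  set N : ℝ := ‖d‖ with hN
  -- Fact: φ(xp) = m
  have hxpm : f xp + g xp = m := by
    obtain ⟨z, hz⟩ := hach
    exact le_antisymm (hz ▸ hxp z) (hm xp)
  -- (1) descent lemma
  have h1 : f xplus ≤ f x + ⟪w, xplus - x⟫ + L / 2 * ‖xplus - x‖ ^ 2 :=
    descent_lemma hf hLip x xplus
  have e1a : xplus - x = -d := by rw [hd]; abel
  rw [e1a, inner_neg_right, norm_neg, ← hN] at h1
  -- h1 : f xplus ≤ f x - a + L/2 * N^2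
  -- (2) convexity gradient inequality
  have h2 : f x + ⟪w, xp - x⟫ ≤ f xp := grad_convex_ineq hf hfconv x xp
  rw [← hp] at h2
  -- h2 : f x + b ≤ f xp
  -- (3) prox variational inequality
  have h3 : g xplus ≤ g xp + (1/t) * ⟪xplus - (x - t • f' x), xp - xplus⟫ :=
    prox_var_ineq hgconv ht hprox xp
  have e3a : xplus - (x - t • f' x) = t • w - d := by rw [hd, hw]; abel
  have e3b : xp - xplus = p + d := by rw [hp, hd]; abel
  have e3 : ⟪xplus - (x - t • f' x), xp - xplus⟫ = t * b + t * a - c - N ^ 2 := by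
    rw [e3a, e3b, inner_sub_left, inner_add_right, inner_add_right,
      real_inner_smul_left, real_inner_smul_left, real_inner_self_eq_norm_sq]
    rw [hA, hB, hCc, hN]
    ring
  rw [e3] at h3
  -- the goal's inner product
  have egoal : ⟪t⁻¹ • (x - xplus), x - xp⟫ = -(t⁻¹ * c) := by
    have : x - xp = -p := by rw [hp]; abel
    rw [← hd, this, real_inner_smul_left, inner_neg_right, ← hCc]
    ring
  rw [egoal]
  -- the condition norm
  have econd : ‖t⁻¹ • (x - xplus)‖ ^ 2 = t⁻¹ ^ 2 * N ^ 2 := by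
    rw [← hd, norm_smul, Real.norm_eq_abs, abs_of_pos (inv_pos.mpr ht), ← hN, mul_pow]
  rw [econd] at hcond
  -- auxiliary scalar facts
  have htL' : L * t ≤ 1 := by
    rw [le_div_iff₀ hL] at htL; linarith
  have htε : t * ε ≤ 2 := by
    rw [le_div_iff₀ ht] at hεt; linarith
  have hmplus : m ≤ f xplus + g xplus := hm xplus
  have htne : t ≠ 0 := ne_of_gt ht
  -- combine h1, h2, h3: φ(xplus) ≤ m - c/t - N²/t + (L/2) N²
  have hkey : f xplus + g xplus ≤ m - c / t - N ^ 2 / t + L / 2 * N ^ 2 := by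
    have h3' : g xplus ≤ g xp + b + a - c / t - N ^ 2 / t := by
      have heq : (1/t) * (t * b + t * a - c - N ^ 2) = b + a - c / t - N ^ 2 / t := by
        field_simp
      rw [heq] at h3
      linarith
    -- f xplus + g xplus ≤ (f x - a + L/2 N²) + (g xp + b + a - c/t - N²/t)
    -- and f x ≤ f xp - b
    rw [← hA] at h1
    rw [← hB] at h2
    nlinarith [h1, h2, h3', hxpm]
  -- N²/(2t) ≥ (t/2) ε (φx - φxplus) from hcond
  have hNbd : (t/2) * (ε * ((f x + g x) - (f xplus + g xplus))) ≤ N ^ 2 / (2 * t) := by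
    have h := mul_le_mul_of_nonneg_left hcond (by positivity : (0:ℝ) ≤ t/2)
    have heq : t / 2 * (t⁻¹ ^ 2 * N ^ 2) = N ^ 2 / (2 * t) := by
      field_simp
    rw [heq] at h
    linarith
  -- L/2 N² ≤ N²/(2t)
  have hL2 : L / 2 ≤ 1 / (2 * t) := by
    rw [div_le_div_iff₀ (by norm_num : (0:ℝ) < 2) (by positivity : (0:ℝ) < 2 * t)]
    nlinarith [htL']
  have hLN : L / 2 * N ^ 2 ≤ N ^ 2 / (2 * t) := by
    have := mul_le_mul_of_nonneg_right hL2 (sq_nonneg N)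
    calc L / 2 * N ^ 2 ≤ 1 / (2 * t) * N ^ 2 := this
      _ = N ^ 2 / (2 * t) := by ring
  have hhalf : N ^ 2 / t = 2 * (N ^ 2 / (2 * t)) := by
    field_simp
  -- conclusion
  have hfinal : -(t⁻¹ * c) = -(c / t) := by
    field_simp
  rw [hfinal]
  have hu0 : 0 ≤ t * ε / 2 := by positivity
  have hu1 : t * ε / 2 ≤ 1 := by linarith
  have hprod : 0 ≤ (1 - t * ε / 2) * ((f xplus + g xplus) - m) :=
    mul_nonneg (by linarith) (by linarith)
  nlinarith [hkey, hNbd, hLN, hhalf, hprod, hmplus]
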